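/- Let R be a commutative ring, let h be a formal power series in one variable s over R with constant coefficient χ, and let g ≥ 1 be a natural number. Then there exists a polynomial f ∈ R[t] of degree at most g-1 whose constant coefficient f(0) equals the coefficient of s^g in h, such that in R[[t]] one has (1 - χ·t)^{g+1} · Σ_{n≥1} c_g(hⁿ)·tⁿ = t·f(t), where c_g(f) denotes the coefficient of s^g. -/

import Mathlib

open PowerSeries Finset

private lemma aux_coeff_one_sub (R : Type*) [CommRing R] (χ : R) (φ : PowerSeries R) (n : ℕ) :
    PowerSeries.coeff n ((1 - PowerSeries.C χ * PowerSeries.X) * φ) =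
      PowerSeries.coeff n φ - χ * (if n = 0 then 0 else PowerSeries.coeff (n - 1) φ) := by
  rw [sub_mul, one_mul, map_sub, mul_assoc, PowerSeries.coeff_C_mul]
  cases n with
  | zero => simp
  | succ m => simp [PowerSeries.coeff_succ_X_mul]

private lemma aux_geom (R : Type*) [CommRing R] (χ : R) (j : ℕ) :
    (1 - PowerSeries.C χ * PowerSeries.X) ^ (j + 1) *
      PowerSeries.mk (fun n => (n.choose j : R) * χ ^ (n - j)) = PowerSeries.X ^ j := by
  induction j with
  | zero =>
    rw [pow_one, pow_zero]
    ext n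
    rw [aux_coeff_one_sub]
    cases n with
    | zero => simp
    | succ m => simp [pow_succ, mul_comm]
  | succ j ih =>
    have step : (1 - PowerSeries.C χ * PowerSeries.X) *
        PowerSeries.mk (fun n => (n.choose (j+1) : R) * χ ^ (n - (j+1))) =
        PowerSeries.X * PowerSeries.mk (fun n => (n.choose j : R) * χ ^ (n - j)) := by
      ext n
      rw [aux_coeff_one_sub]
      cases n with
      | zero => simp
      | succ m =>
        simp only [PowerSeries.coeff_mk, PowerSeries.coeff_succ_X_mul, Nat.succ_ne_zero,
          if_false, Nat.succ_sub_succ, Nat.sub_zero]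
        by_cases hm : j + 1 ≤ m
        · have h1 : χ * χ ^ (m - (j + 1)) = χ ^ (m - j) := by
            rw [← pow_succ']
            congr 1
            omega
          rw [Nat.choose_succ_succ m j, Nat.cast_add, add_mul]
          linear_combination (-(m.choose (j+1) : ℕ) : R) * h1
        · have h0 : m.choose (j+1) = 0 := Nat.choose_eq_zero_of_lt (by omega)
          have h1 : (m+1).choose (j+1) = m.choose j := by
            rcases Nat.lt_or_ge m j with hlt | hge
            · rw [Nat.choose_eq_zero_of_lt (by omega), Nat.choose_eq_zero_of_lt hlt]
            · have : m = j := by omega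
              subst this
              simp
          rw [h0, h1]
          simp
    calc (1 - PowerSeries.C χ * PowerSeries.X) ^ (j + 1 + 1) *
        PowerSeries.mk (fun n => (n.choose (j+1) : R) * χ ^ (n - (j+1)))
        = (1 - PowerSeries.C χ * PowerSeries.X) ^ (j + 1) *
          ((1 - PowerSeries.C χ * PowerSeries.X) *
            PowerSeries.mk (fun n => (n.choose (j+1) : R) * χ ^ (n - (j+1)))) := by ring
      _ = PowerSeries.X * ((1 - PowerSeries.C χ * PowerSeries.X) ^ (j + 1) *
            PowerSeries.mk (fun n => (n.choose j : R) * χ ^ (n - j))) := by rw [step]; ring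
      _ = PowerSeries.X ^ (j + 1) := by rw [ih]; ring

theorem statement2 (R : Type*) [CommRing R] (h : PowerSeries R) (g : ℕ) (hg : 1 ≤ g)
    (χ : R) (hχ : χ = PowerSeries.constantCoeff h) :
    ∃ f : Polynomial R, f.natDegree ≤ g - 1 ∧
      f.coeff 0 = PowerSeries.coeff g h ∧
      (1 - PowerSeries.C χ * PowerSeries.X) ^ (g + 1) *
          PowerSeries.mk (fun n => if n = 0 then 0 else PowerSeries.coeff g (h ^ n)) =
        PowerSeries.X * (f : PowerSeries R) := by
  classical
  set k : PowerSeries R := PowerSeries.mk fun n => PowerSeries.coeff (n+1) h with hk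
  have hdecomp : h = PowerSeries.C χ + PowerSeries.X * k := by
    ext n
    cases n with
    | zero => simp [hχ, hk]
    | succ m => simp [hk, PowerSeries.coeff_succ_X_mul, PowerSeries.coeff_C]
  set a : ℕ → R := fun j => PowerSeries.coeff (g - j) (k ^ j) with ha
  -- closed form for the coefficients
  have key : ∀ n : ℕ, PowerSeries.coeff g (h ^ n) =
      ∑ j ∈ Icc 1 g, (n.choose j : R) * χ ^ (n - j) * a j := by
    intro n
    have expand : h ^ n = ∑ j ∈ range (n+1),
        (PowerSeries.X * k) ^ j * (PowerSeries.C χ) ^ (n - j) * (n.choose j : PowerSeries R) := by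
      rw [hdecomp, add_comm, add_pow]
    rw [expand, map_sum]
    have term_eval : ∀ j, PowerSeries.coeff g
        ((PowerSeries.X * k) ^ j * (PowerSeries.C χ) ^ (n - j) * (n.choose j : PowerSeries R))
        = if j ≤ g then (n.choose j : R) * χ ^ (n - j) * a j else 0 := by
      intro j
      have : (PowerSeries.X * k) ^ j * (PowerSeries.C χ) ^ (n - j) * (n.choose j : PowerSeries R)
          = PowerSeries.C ((n.choose j : R) * χ ^ (n - j)) * (PowerSeries.X ^ j * k ^ j) := by
        rw [map_mul, map_natCast, map_pow]
        ring
      rw [this, PowerSeries.coeff_C_mul, PowerSeries.coeff_X_pow_mul']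
      split_ifs with hj
      · rfl
      · simp
    -- both sides equal a sum over range (n + g + 2)
    have hzero_big : ∀ j, n < j → PowerSeries.coeff g
        ((PowerSeries.X * k) ^ j * (PowerSeries.C χ) ^ (n - j) * (n.choose j : PowerSeries R)) = 0 := by
      intro j hj
      rw [term_eval]
      split_ifs
      · rw [Nat.choose_eq_zero_of_lt hj]; simp
      · rfl
    have ha0 : a 0 = 0 := by
      simp only [ha]
      rw [pow_zero, Nat.sub_zero, PowerSeries.coeff_one, if_neg (by omega : ¬ g = 0)]
    calc ∑ j ∈ range (n+1), PowerSeries.coeff g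
          ((PowerSeries.X * k) ^ j * (PowerSeries.C χ) ^ (n - j) * (n.choose j : PowerSeries R))
        = ∑ j ∈ range (n + g + 2), PowerSeries.coeff g
          ((PowerSeries.X * k) ^ j * (PowerSeries.C χ) ^ (n - j) * (n.choose j : PowerSeries R)) :=
          Finset.sum_subset (Finset.range_subset_range.2 (by omega : n + 1 ≤ n + g + 2))
            (fun j _ hj => hzero_big j (by simp at hj; omega))
      _ = ∑ j ∈ Icc 1 g, PowerSeries.coeff g
          ((PowerSeries.X * k) ^ j * (PowerSeries.C χ) ^ (n - j) * (n.choose j : PowerSeries R)) := by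
          refine (Finset.sum_subset (show Icc 1 g ⊆ range (n + g + 2) by
            intro j hj; simp only [mem_Icc] at hj; simp; omega) (fun j hj hj' => ?_)).symm
          rw [term_eval]
          simp only [mem_Icc, not_and_or, not_le] at hj'
          rcases hj' with hj0 | hjg
          · interval_cases j
            rw [if_pos (by omega), ha0, mul_zero]
          · rw [if_neg (by omega)]
      _ = ∑ j ∈ Icc 1 g, (n.choose j : R) * χ ^ (n - j) * a j := by
          refine Finset.sum_congr rfl fun j hj => ?_
          rw [term_eval]
          simp only [mem_Icc] at hj
          rw [if_pos hj.2]
  -- rewrite the mk series as a finite combination of geometric series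
  have series_eq : PowerSeries.mk (fun n => if n = 0 then 0 else PowerSeries.coeff g (h ^ n)) =
      ∑ j ∈ Icc 1 g, PowerSeries.C (a j) *
        PowerSeries.mk (fun n => (n.choose j : R) * χ ^ (n - j)) := by
    ext n
    rw [map_sum, PowerSeries.coeff_mk]
    cases n with
    | zero =>
      rw [if_pos rfl]
      refine (Finset.sum_eq_zero fun j hj => ?_).symm
      simp only [mem_Icc] at hj
      rw [PowerSeries.coeff_C_mul, PowerSeries.coeff_mk, Nat.choose_eq_zero_of_lt (by omega)]
      simp
    | succ m =>
      rw [if_neg (Nat.succ_ne_zero m), key]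
      exact Finset.sum_congr rfl fun j hj => by
        rw [PowerSeries.coeff_C_mul, PowerSeries.coeff_mk]; ring
  -- define the polynomial
  refine ⟨∑ j ∈ Icc 1 g, Polynomial.C (a j) * Polynomial.X ^ (j - 1) *
      (1 - Polynomial.C χ * Polynomial.X) ^ (g - j), ?_, ?_, ?_⟩
  · refine (Polynomial.natDegree_sum_le _ _).trans ?_
    rw [Finset.fold_max_le]
    constructor
    · omega
    · intro j hj
      simp only [mem_Icc] at hj
      have hdeg1 : (1 - Polynomial.C χ * Polynomial.X).natDegree ≤ 1 :=
        (Polynomial.natDegree_sub_le _ _).trans (max_le (by simp)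
          ((Polynomial.natDegree_C_mul_le _ _).trans Polynomial.natDegree_X_le))
      calc (Polynomial.C (a j) * Polynomial.X ^ (j - 1) *
            (1 - Polynomial.C χ * Polynomial.X) ^ (g - j)).natDegree
          ≤ (Polynomial.C (a j) * Polynomial.X ^ (j - 1)).natDegree +
            ((1 - Polynomial.C χ * Polynomial.X) ^ (g - j)).natDegree :=
            Polynomial.natDegree_mul_le
        _ ≤ (j - 1) + (g - j) * 1 := by
            refine add_le_add ((Polynomial.natDegree_C_mul_le _ _).trans
              (Polynomial.natDegree_X_pow_le _)) ?_
            exact Polynomial.natDegree_pow_le.trans (Nat.mul_le_mul_left _ hdeg1)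
        _ ≤ g - 1 := by omega
  · rw [Polynomial.finset_sum_coeff]
    rw [Finset.sum_eq_single 1]
    · have h1 : a 1 = PowerSeries.coeff g h := by
        have hgg : g - 1 + 1 = g := by omega
        simp only [ha, pow_one, hk, PowerSeries.coeff_mk, hgg]
      rw [Polynomial.coeff_zero_eq_eval_zero]
      simp [h1]
    · intro j hj hj1
      simp only [mem_Icc] at hj
      rw [Polynomial.coeff_zero_eq_eval_zero]
      simp [zero_pow (show j - 1 ≠ 0 by omega)]
    · intro hj
      exact (hj (Finset.mem_Icc.mpr ⟨le_rfl, hg⟩)).elim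
  · rw [series_eq, Finset.mul_sum, ← Polynomial.coeToPowerSeries.ringHom_apply, map_sum,
      Finset.mul_sum]
    refine Finset.sum_congr rfl fun j hj => ?_
    simp only [mem_Icc] at hj
    have hcoe : Polynomial.coeToPowerSeries.ringHom (Polynomial.C (a j) *
        Polynomial.X ^ (j - 1) * (1 - Polynomial.C χ * Polynomial.X) ^ (g - j)) =
        PowerSeries.C (a j) * PowerSeries.X ^ (j - 1) *
          (1 - PowerSeries.C χ * PowerSeries.X) ^ (g - j) := by
      simp only [map_mul, map_pow, map_sub, map_one, Polynomial.coeToPowerSeries.ringHom_apply,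
        Polynomial.coe_C, Polynomial.coe_X]
    rw [hcoe]
    have hgj : g + 1 = (g - j) + (j + 1) := by omega
    have hXj : (PowerSeries.X : PowerSeries R) ^ j =
        PowerSeries.X * PowerSeries.X ^ (j - 1) := by
      conv_lhs => rw [show j = (j - 1) + 1 by omega]
      rw [pow_succ]; ring
    calc (1 - PowerSeries.C χ * PowerSeries.X) ^ (g + 1) *
          (PowerSeries.C (a j) * PowerSeries.mk (fun n => (n.choose j : R) * χ ^ (n - j)))
        = PowerSeries.C (a j) * (1 - PowerSeries.C χ * PowerSeries.X) ^ (g - j) *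
            ((1 - PowerSeries.C χ * PowerSeries.X) ^ (j + 1) *
              PowerSeries.mk (fun n => (n.choose j : R) * χ ^ (n - j))) := by
          rw [hgj, pow_add]; ring
      _ = PowerSeries.C (a j) * (1 - PowerSeries.C χ * PowerSeries.X) ^ (g - j) *
            PowerSeries.X ^ j := by rw [aux_geom]
      _ = PowerSeries.X * (PowerSeries.C (a j) * PowerSeries.X ^ (j - 1) *
            (1 - PowerSeries.C χ * PowerSeries.X) ^ (g - j)) := by rw [hXj]; ring
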